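/- Let t1,...,tn be transitions without temporary variables (all guards and updates only involve program variables), with t_i = (ℓ_i, φ_i, η_i, ℓ_{i+1}) for 1 ≤ i ≤ n, so that the target location of t_i is the start location of t_{i+1}. Then for all states σ, σ': there is an evaluation (ℓ1, σ) →_{t1} ∘ →_{t2} ∘ ... ∘ →_{tn} (ℓ_{n+1}, σ') if and only if (ℓ1, σ) →_{t1 ⋆ ... ⋆ tn} (ℓ_{n+1}, σ'), where t1 ⋆ ... ⋆ tn is the chained transition. In particular, chaining exactly captures the composed evaluation relation of the sequence of transitions. -/

import Mathlib

open scoped Classical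

noncomputable section

namespace Koat

/-! ### Formulas over polynomial atoms `p < q` -/

inductive Fml (V : Type*) where
  | lt  : MvPolynomial V ℤ → MvPolynomial V ℤ → Fml V
  | and : Fml V → Fml V → Fml V
  | or  : Fml V → Fml V → Fml V

namespace Fml

variable {V : Type*}

/-- A formula holds in a state `σ : V → ℤ`. -/
def holds (σ : V → ℤ) : Fml V → Prop
  | .lt p q  => MvPolynomial.eval σ p < MvPolynomial.eval σ q
  | .and f g => holds σ f ∧ holds σ g
  | .or f g  => holds σ f ∨ holds σ g

/-- Applying an update `η` to a formula (substituting `η v` for each variable `v`). -/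
def subst (η : V → MvPolynomial V ℤ) : Fml V → Fml V
  | .lt p q  => .lt (MvPolynomial.bind₁ η p) (MvPolynomial.bind₁ η q)
  | .and f g => .and (subst η f) (subst η g)
  | .or f g  => .or (subst η f) (subst η g)

/-- The variables occurring in a formula. -/
def vars : Fml V → Finset V
  | .lt p q  => p.vars ∪ q.vars
  | .and f g => vars f ∪ vars g
  | .or f g  => vars f ∪ vars g

/-- The list of atoms `(s₁, s₂)` (meaning `s₁ < s₂`) occurring in a formula. -/
def atoms : Fml V → List (MvPolynomial V ℤ × MvPolynomial V ℤ)
  | .lt p q  => [(p, q)]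
  | .and f g => atoms f ++ atoms g
  | .or f g  => atoms f ++ atoms g

end Fml

/-! ### Bounds -/

/-- The set `𝓑` of bounds: built from `ℕ ∪ {ω}`, variables, `+`, `·`, `k^{·}`. -/
inductive Bnd (V : Type*) where
  | const : ℕ∞ → Bnd V
  | var : V → Bnd V
  | add : Bnd V → Bnd V → Bnd V
  | mul : Bnd V → Bnd V → Bnd V
  | exp : ℕ → Bnd V → Bnd V

/-- `k ^ e` for `e : ℕ∞`. -/
def epow (k : ℕ) (e : ℕ∞) : ℕ∞ := if e = ⊤ then ⊤ else ((k ^ e.toNat : ℕ) : ℕ∞)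

namespace Bnd

variable {V : Type*}

/-- Evaluation of a bound in a (non-negative) state, with values in `ℕ ∪ {ω}`. -/
def eval (σ : V → ℕ) : Bnd V → ℕ∞
  | .const c => c
  | .var v => (σ v : ℕ∞)
  | .add b₁ b₂ => eval σ b₁ + eval σ b₂
  | .mul b₁ b₂ => eval σ b₁ * eval σ b₂
  | .exp k b => epow k (eval σ b)

/-- `b [v / f v | v ∈ PV]`: substitute the bound `f v` for every program variable `v ∈ PV`. -/
def substOn (PV : Set V) (f : V → Bnd V) : Bnd V → Bnd V
  | .const c => .const c
  | .var v => if v ∈ PV then f v else .var v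
  | .add b₁ b₂ => .add (substOn PV f b₁) (substOn PV f b₂)
  | .mul b₁ b₂ => .mul (substOn PV f b₁) (substOn PV f b₂)
  | .exp k b => .exp k (substOn PV f b)

end Bnd

/-- The sum of a list of bounds. -/
def bndSum {V : Type*} (l : List (Bnd V)) : Bnd V := l.foldr Bnd.add (Bnd.const 0)

/-! ### Integer programs -/

/-- A transition `(ℓ, φ, η, ℓ')`. -/
structure Trans (L V : Type*) where
  src : L
  guard : Fml V
  update : V → MvPolynomial V ℤ
  tgt : L

/-- A configuration `(ℓ, σ)`. -/
abbrev Config (L V : Type*) := L × (V → ℤ)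

/-- The evaluation step `(ℓ, σ) →_t (ℓ', σ')`: program variables are updated by `t.update`,
temporary variables (those outside `PV`) get arbitrary values. -/
def Step {L V : Type*} (PV : Set V) (t : Trans L V) (c c' : Config L V) : Prop :=
  c.1 = t.src ∧ c'.1 = t.tgt ∧ t.guard.holds c.2 ∧
    ∀ v ∈ PV, c'.2 v = MvPolynomial.eval c.2 (t.update v)

/-- `→_S`, the union of `→_t` over `t ∈ S`. -/
def StepAny {L V : Type*} (PV : Set V) (S : Finset (Trans L V)) :
    Config L V → Config L V → Prop :=
  fun c c' => ∃ t ∈ S, Step PV t c c'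

/-- `k`-fold composition of a relation. -/
def relPow {α : Type*} (R : α → α → Prop) : ℕ → α → α → Prop
  | 0 => Eq
  | n + 1 => Relation.Comp (relPow R n) R

/-- `→*_S ∘ →_t`. -/
def starThen {L V : Type*} (PV : Set V) (S : Finset (Trans L V)) (t : Trans L V) :
    Config L V → Config L V → Prop :=
  Relation.Comp (Relation.ReflTransGen (StepAny PV S)) (Step PV t)

/-- `|σ|`, the state of absolute values. -/
def absState {V : Type*} (σ : V → ℤ) : V → ℕ := fun v => (σ v).natAbs

/-- `RB` is a global runtime bound for the program `(PV, L, ℓ₀, T)`. -/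
def IsGlobalRB {L V : Type*} (PV : Set V) (ℓ₀ : L) (T : Finset (Trans L V))
    (RB : Trans L V → Bnd V) : Prop :=
  ∀ t ∈ T, ∀ σ₀ : V → ℤ,
    (⨆ k ∈ {k : ℕ | ∃ c' : Config L V, relPow (starThen PV T t) k (ℓ₀, σ₀) c'}, (k : ℕ∞))
      ≤ (RB t).eval (absState σ₀)

/-- `SB` is a size bound for the program `(PV, L, ℓ₀, T)`. -/
def IsSizeBound {L V : Type*} (PV : Set V) (ℓ₀ : L) (T : Finset (Trans L V))
    (SB : Trans L V → V → Bnd V) : Prop :=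
  ∀ t ∈ T, ∀ v ∈ PV, ∀ σ₀ : V → ℤ,
    (⨆ s ∈ {s : ℕ | ∃ c' : Config L V, starThen PV T t (ℓ₀, σ₀) c' ∧ s = (c'.2 v).natAbs},
      (s : ℕ∞)) ≤ (SB t v).eval (absState σ₀)

/-- The entry transitions `E_{T'}`. -/
def entrySet {L V : Type*} (T T' : Finset (Trans L V)) : Set (Trans L V) :=
  {t | t ∈ T ∧ t ∉ T' ∧ ∃ t' ∈ T', t'.src = t.tgt}

/-- `RB` is a local runtime bound for `T'gt` w.r.t. `T'` in the program `(PV, L, ℓ₀, T)`. -/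
def IsLocalRB {L V : Type*} (PV : Set V) (ℓ₀ : L) (T T'gt T' : Finset (Trans L V))
    (RB : Trans L V → Bnd V) : Prop :=
  ∀ t ∈ T'gt, ∀ r ∈ entrySet T T', ∀ σ : V → ℤ,
    (⨆ k ∈ {k : ℕ | ∃ (σ₀ : V → ℤ) (c' : Config L V),
        starThen PV T r (ℓ₀, σ₀) (r.tgt, σ) ∧ relPow (starThen PV T' t) k (r.tgt, σ) c'},
      (k : ℕ∞)) ≤ (RB r).eval (absState σ)

/-- Chaining two transitions: `t₁ ⋆ t₂`. -/
def chain2 {L V : Type*} (t₁ t₂ : Trans L V) : Trans L V :=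
  ⟨t₁.src, (t₁.guard).and (t₂.guard.subst t₁.update),
    fun v => MvPolynomial.bind₁ t₁.update (t₂.update v), t₂.tgt⟩

/-- Chaining a (nonempty) list of transitions `t₁ ⋆ ⋯ ⋆ tₙ` (with a default for `[]`). -/
def chainFold {L V : Type*} (dflt : Trans L V) : List (Trans L V) → Trans L V
  | [] => dflt
  | t :: ts => ts.foldl chain2 t

/-- The composed evaluation relation `→_{t₁} ∘ ⋯ ∘ →_{tₙ}`. -/
def stepsList {L V : Type*} (PV : Set V) : List (Trans L V) → Config L V → Config L V → Prop
  | [] => Eq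
  | t :: ts => Relation.Comp (Step PV t) (stepsList PV ts)

/-! ### Twn-loops -/

/-- An update `η` as a function on states `ℤ^d → ℤ^d`. -/
def updFun {d : ℕ} (η : Fin d → MvPolynomial (Fin d) ℤ) (σ : Fin d → ℤ) : Fin d → ℤ :=
  fun i => MvPolynomial.eval σ (η i)

/-- `η` is triangular weakly non-linear with data `c`, `p`:
`η xᵢ = cᵢ·xᵢ + pᵢ` with `pᵢ ∈ ℤ[x_{i+1},…,x_d]`. -/
def IsTriangular {d : ℕ} (η : Fin d → MvPolynomial (Fin d) ℤ) (c : Fin d → ℤ)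
    (p : Fin d → MvPolynomial (Fin d) ℤ) : Prop :=
  ∀ i, η i = MvPolynomial.C (c i) * MvPolynomial.X i + p i ∧ ∀ j ∈ (p i).vars, i < j

/-- Triangular weakly non-linear update. -/
def IsTWN {d : ℕ} (η : Fin d → MvPolynomial (Fin d) ℤ) : Prop :=
  ∃ c p, IsTriangular η c p

/-- Triangular weakly non-linear update with non-negative coefficients. -/
def IsTNN {d : ℕ} (η : Fin d → MvPolynomial (Fin d) ℤ) : Prop :=
  ∃ c p, IsTriangular η c p ∧ ∀ i, 0 ≤ c i

/-- `(b₁,a₁) >_lex (b₂,a₂)`. -/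
def lexGt (b₁ a₁ b₂ a₂ : ℕ) : Prop := b₂ < b₁ ∨ (b₁ = b₂ ∧ a₂ < a₁)

/-- The set of all valid `k`-monotonicity thresholds of `(b₁,a₁)` and `(b₂,a₂)`. -/
def mthSet (k b₁ a₁ b₂ a₂ : ℕ) : Set ℕ :=
  {n₀ | ∀ n ≥ n₀, k * (n ^ a₂ * b₂ ^ n) < n ^ a₁ * b₁ ^ n}

/-- The `k`-monotonicity threshold of `(b₁,a₁)` and `(b₂,a₂)` (the smallest member of
`mthSet`, when it exists). -/
def mth (k b₁ a₁ b₂ a₂ : ℕ) : ℕ := sInf (mthSet k b₁ a₁ b₂ a₂)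

/-- `M_j` as in the paper. -/
def Mdef (b a : ℕ → ℕ) (j : ℕ) : ℕ :=
  if b j = b (j - 1) then 0 else mth 1 (b j) (a j) (b (j - 1)) (a (j - 1) + 1)

/-- `N_j` as in the paper. -/
def Ndef (b a : ℕ → ℕ) (j : ℕ) : ℕ :=
  if j = 2 then 1
  else if j = 3 then mth 1 (b 2) (a 2) (b 1) (a 1)
  else
    max ((Finset.Icc 1 (j - 3)).sup fun i => mth 1 (b (j - 2)) (a (j - 2)) (b i) (a i))
      (mth (j - 2) (b (j - 1)) (a (j - 1)) (b (j - 2)) (a (j - 2)))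

/-- The over-approximation `⊔ {p j | j ∈ s}`: each monomial gets the maximal absolute value
of its coefficients in the `p j`. -/
def sqcupF {d : ℕ} {ι : Type*} (s : Finset ι) (p : ι → MvPolynomial (Fin d) ℤ) :
    MvPolynomial (Fin d) ℤ :=
  ∑ m ∈ s.biUnion fun j => (p j).support,
    MvPolynomial.monomial m (((s.sup fun j => ((p j).coeff m).natAbs : ℕ) : ℤ))

/-- Normalized poly-exponential expressions, as finite (formal) sums of
`p · n^a · b^n` with `p ∈ ℚ[x₁,…,x_d]`. -/
abbrev NPE (d : ℕ) := List (MvPolynomial (Fin d) ℚ × ℕ × ℕ)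

/-- The value of a normalized poly-exponential expression at `(e, n)`. -/
def evalNPE {d : ℕ} (l : NPE d) (e : Fin d → ℤ) (n : ℕ) : ℚ :=
  (l.map fun tr =>
    MvPolynomial.eval (fun i => (e i : ℚ)) tr.1 * (n : ℚ) ^ tr.2.1 * (tr.2.2 : ℚ) ^ n).sum


lemma eval_bind₁' {V : Type*} (σ : V → ℤ) (η : V → MvPolynomial V ℤ)
    (p : MvPolynomial V ℤ) :
    MvPolynomial.eval σ (MvPolynomial.bind₁ η p)
      = MvPolynomial.eval (fun v => MvPolynomial.eval σ (η v)) p := by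
  simp only [MvPolynomial.eval, MvPolynomial.eval₂Hom_bind₁]

lemma holds_subst {V : Type*} (σ : V → ℤ) (η : V → MvPolynomial V ℤ) (f : Fml V) :
    (f.subst η).holds σ ↔ f.holds (fun v => MvPolynomial.eval σ (η v)) := by
  induction f with
  | lt p q => simp [Fml.subst, Fml.holds, eval_bind₁']
  | and f g ihf ihg => simp [Fml.subst, Fml.holds, ihf, ihg]
  | or f g ihf ihg => simp [Fml.subst, Fml.holds, ihf, ihg]

lemma step_chain2 {L V : Type*} (t₁ t₂ : Trans L V) (h : t₁.tgt = t₂.src)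
    (c c' : Config L V) :
    Relation.Comp (Step (Set.univ : Set V) t₁) (Step (Set.univ : Set V) t₂) c c' ↔
      Step (Set.univ : Set V) (chain2 t₁ t₂) c c' := by
  constructor
  · rintro ⟨c'', ⟨h1, h2, h3, h4⟩, ⟨h1', h2', h3', h4'⟩⟩
    have hmid : c''.2 = fun v => MvPolynomial.eval c.2 (t₁.update v) :=
      funext fun v => h4 v (Set.mem_univ v)
    refine ⟨h1, h2', ⟨h3, ?_⟩, ?_⟩
    · rw [holds_subst, ← hmid]; exact h3'
    · intro v _
      show c'.2 v = MvPolynomial.eval c.2 (MvPolynomial.bind₁ t₁.update (t₂.update v))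
      rw [h4' v (Set.mem_univ v), eval_bind₁', hmid]
  · rintro ⟨h1, h2, ⟨h3, h3'⟩, h4⟩
    refine ⟨(t₂.src, fun v => MvPolynomial.eval c.2 (t₁.update v)),
      ⟨h1, h ▸ rfl, h3, fun v _ => rfl⟩, ⟨rfl, h2, ?_, ?_⟩⟩
    · exact (holds_subst c.2 t₁.update t₂.guard).mp h3'
    · intro v hv
      rw [h4 v hv]
      exact eval_bind₁' c.2 t₁.update (t₂.update v)

/-- chaining exactly captures the composed evaluation relation:
`(ℓ₁,σ) →_{t₁} ∘ ⋯ ∘ →_{tₙ} (ℓ_{n+1},σ')` iff `(ℓ₁,σ) →_{t₁ ⋆ ⋯ ⋆ tₙ} (ℓ_{n+1},σ')`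
(all variables are program variables, i.e. there are no temporary variables). -/
theorem chaining_captures_composition {L V : Type*}
    (t : Trans L V) (ts : List (Trans L V))
    (hloc : List.Chain' (fun t₁ t₂ => t₁.tgt = t₂.src) (t :: ts)) :
    ∀ c c' : Config L V,
      stepsList (Set.univ : Set V) (t :: ts) c c' ↔
        Step (Set.univ : Set V) (ts.foldl chain2 t) c c' := by
  induction ts generalizing t with
  | nil =>
    intro c c'
    simp only [stepsList, List.foldl_nil, Relation.Comp]
    constructor
    · rintro ⟨c'', hs, rfl⟩; exact hs
    · intro hs; exact ⟨c', hs, rfl⟩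
  | cons t₂ ts' ih =>
    intro c c'
    have htgt : t.tgt = t₂.src := hloc.rel_head
    have hloc' : List.Chain' (fun t₁ t₂ => t₁.tgt = t₂.src) (chain2 t t₂ :: ts') := by
      have h2 := hloc.tail
      cases ts' with
      | nil => exact List.isChain_singleton _
      | cons t₃ ts'' =>
        exact List.IsChain.cons_cons (show (chain2 t t₂).tgt = t₃.src from h2.rel_head) h2.tail
    rw [List.foldl_cons, ← ih (chain2 t t₂) hloc' c c']
    simp only [stepsList, Relation.Comp]
    constructor
    · rintro ⟨c₁, hs1, c₂, hs2, hrest⟩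
      exact ⟨c₂, (step_chain2 t t₂ htgt c c₂).mp ⟨c₁, hs1, hs2⟩, hrest⟩
    · rintro ⟨c₂, hch, hrest⟩
      obtain ⟨c₁, hs1, hs2⟩ := (step_chain2 t t₂ htgt c c₂).mpr hch
      exact ⟨c₁, hs1, c₂, hs2, hrest⟩

end Koat
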